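/- Let α ∈ (0, 2π), n ≥ 1, 0 < ε < 1 with n·(π/2)·ε < n·α − 2π. Let F : ℝ × (0, δ) → ℝ × (0, ∞) be such that all iterates F, F², …, Fⁿ are defined on points of β̂ = (a,b) × {r₀} (b − a < 2π), and suppose that for every (θ₀, r₀) ∈ β̂ and 1 ≤ j ≤ n, writing Fʲ(θ₀, r₀) = (θⱼ, rⱼ), one has |θⱼ − (θ₀ + jα)| < j·(π/2)·ε. If Fⁿ(β̂) ∩ (β̂ + (2kπ, 0)) ≠ ∅ for some integer k, then k ≥ 1. -/
import Mathlib


open Real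

/-- Lemma 7: the `n`-th iterate of the lift moves the segment `β̂` by at least one
full turn: if `Fⁿ(β̂)` meets `β̂ + (2kπ, 0)` then `k ≥ 1`. -/
theorem iterate_translate_index_pos
    (F : ℝ × ℝ → ℝ × ℝ) (α ε δ a b r₀ : ℝ) (n : ℕ) (k : ℤ)
    (hn : 1 ≤ n)
    (hα0 : 0 < α) (hα1 : α < 2 * π)
    (hε0 : 0 < ε) (hε1 : ε < 1)
    (hna : (n : ℝ) * (π / 2) * ε < (n : ℝ) * α - 2 * π)
    (ha0 : 0 ≤ a) (ha1 : a < 2 * π) (hab : b - a < 2 * π)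
    (hr0 : 0 < r₀) (hrδ : r₀ < δ)
    (hiter : ∀ θ₀ ∈ Set.Ioo a b, ∀ j : ℕ, 1 ≤ j → j ≤ n →
      |(F^[j] (θ₀, r₀)).1 - (θ₀ + (j : ℝ) * α)| < (j : ℝ) * (π / 2) * ε)
    (hint : ∃ θ₀ ∈ Set.Ioo a b, ∃ θ₁ ∈ Set.Ioo a b,
      F^[n] (θ₀, r₀) = (θ₁ + 2 * (k : ℝ) * π, r₀)) :
    1 ≤ k := by
  obtain ⟨θ₀, hθ₀, θ₁, hθ₁, hF⟩ := hint
  have h := hiter θ₀ hθ₀ n hn le_rfl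
  rw [hF] at h
  simp only at h
  have habs := abs_lt.mp h
  have h1 : θ₁ + 2 * (k : ℝ) * π - (θ₀ + n * α) > -((n : ℝ) * α - 2 * π) := by
    nlinarith [habs.1]
  -- so 2kπ > 2π + θ₀ - θ₁ > 2π - 2π = 0
  have hπ : (0 : ℝ) < π := pi_pos
  have h2 : (0 : ℝ) < 2 * (k : ℝ) * π := by
    have : θ₀ - θ₁ > -(2 * π) := by
      have := hθ₀.1; have := hθ₁.2; linarith
    linarith
  have hk : (0 : ℝ) < (k : ℝ) := by nlinarith
  have : 0 < k := Int.cast_pos.mp hk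
  omega
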